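/- Let ε > 0 and let u : ℤ² × ℝ → ℝ be differentiable in the real variable x₃, with u₃ = ∂₃u, and assume u₃ > 0 and Δ₁u > 0 at every point. Then at every point the identity Δ₁ log u₃ + Δ₂ log(Δ₁u/u₃) = (1/ε)·log[ (T₁u₃·(T₁₂u − T₂u)) / (T₂u₃·(T₁u − u)) ] holds. Consequently, the semi-discrete conservation law Δ₁ log u₃ + Δ₂ log(Δ₁u/u₃) = 0 holds at a point if and only if the differential–difference equation (T₁₂u − T₂u)·T₁u₃ = (T₁u − u)·T₂u₃ holds at that point. -/
import Mathlib


noncomputable section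

/-- Shift of the first (discrete) argument. -/
def S1 (v : ℤ × ℤ × ℝ → ℝ) : ℤ × ℤ × ℝ → ℝ := fun p => v (p.1 + 1, p.2.1, p.2.2)

/-- Shift of the second (discrete) argument. -/
def S2 (v : ℤ × ℤ × ℝ → ℝ) : ℤ × ℤ × ℝ → ℝ := fun p => v (p.1, p.2.1 + 1, p.2.2)

/-- Partial derivative with respect to the third (continuous) variable `x₃`. -/
def d3 (v : ℤ × ℤ × ℝ → ℝ) : ℤ × ℤ × ℝ → ℝ :=
  fun p => deriv (fun s => v (p.1, p.2.1, s)) p.2.2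

/-- Semi-discrete derivative `Δ₁ = (S₁ - 1)/ε`. -/
def D1 (ε : ℝ) (v : ℤ × ℤ × ℝ → ℝ) : ℤ × ℤ × ℝ → ℝ := fun p => (S1 v p - v p) / ε

/-- Semi-discrete derivative `Δ₂ = (S₂ - 1)/ε`. -/
def D2 (ε : ℝ) (v : ℤ × ℤ × ℝ → ℝ) : ℤ × ℤ × ℝ → ℝ := fun p => (S2 v p - v p) / ε

/-- For `u₃ > 0` and `Δ₁u > 0`, the semi-discrete conservation law
`Δ₁ log u₃ + Δ₂ log(Δ₁u/u₃)` equals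
`(1/ε) log[(T₁u₃·(T₁₂u − T₂u))/(T₂u₃·(T₁u − u))]`; in particular it vanishes
iff the differential–difference equation `(T₁₂u − T₂u)T₁u₃ = (T₁u − u)T₂u₃`
holds. -/
theorem semidiscrete_conservation_case4 (ε : ℝ) (hε : 0 < ε) (u : ℤ × ℤ × ℝ → ℝ)
    (hu : ∀ (m n : ℤ), Differentiable ℝ (fun s : ℝ => u (m, n, s)))
    (hu3 : ∀ p : ℤ × ℤ × ℝ, 0 < d3 u p)
    (hD1 : ∀ p : ℤ × ℤ × ℝ, 0 < D1 ε u p) :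
    ∀ p : ℤ × ℤ × ℝ,
      (D1 ε (fun q => Real.log (d3 u q)) p
          + D2 ε (fun q => Real.log (D1 ε u q / d3 u q)) p
        = (1 / ε) * Real.log ((S1 (d3 u) p * (S1 (S2 u) p - S2 u p))
            / (S2 (d3 u) p * (S1 u p - u p))))
      ∧ (D1 ε (fun q => Real.log (d3 u q)) p
          + D2 ε (fun q => Real.log (D1 ε u q / d3 u q)) p = 0
        ↔ (S1 (S2 u) p - S2 u p) * S1 (d3 u) p = (S1 u p - u p) * S2 (d3 u) p) := by
  intro p
  obtain ⟨m, n, x⟩ := p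
  have hε' : ε ≠ 0 := ne_of_gt hε
  have ha : 0 < d3 u (m, n, x) := hu3 _
  have ha1 : 0 < d3 u (m + 1, n, x) := hu3 _
  have ha2 : 0 < d3 u (m, n + 1, x) := hu3 _
  have key : ∀ m' n' : ℤ, 0 < u (m' + 1, n', x) - u (m', n', x) := by
    intro m' n'
    have h := hD1 (m', n', x)
    simp only [D1, S1] at h
    have := mul_pos h hε
    rwa [div_mul_cancel₀ _ hε'] at this
  have hb : 0 < u (m + 1, n, x) - u (m, n, x) := key m n
  have hb2 : 0 < u (m + 1, n + 1, x) - u (m, n + 1, x) := key m (n + 1)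
  simp only [D1, D2, S1, S2]
  set a := d3 u (m, n, x) with hadef
  set a1 := d3 u (m + 1, n, x) with ha1def
  set a2 := d3 u (m, n + 1, x) with ha2def
  set b := u (m + 1, n, x) - u (m, n, x) with hbdef
  set b2 := u (m + 1, n + 1, x) - u (m, n + 1, x) with hb2def
  have heq : (Real.log a1 - Real.log a) / ε
      + (Real.log (b2 / ε / a2) - Real.log (b / ε / a)) / ε
      = (1 / ε) * Real.log (a1 * b2 / (a2 * b)) := by
    have e1 : Real.log (b2 / ε / a2)
        = Real.log b2 - Real.log ε - Real.log a2 := by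
      rw [Real.log_div (by positivity) (ne_of_gt ha2),
          Real.log_div (ne_of_gt hb2) hε']
    have e2 : Real.log (b / ε / a)
        = Real.log b - Real.log ε - Real.log a := by
      rw [Real.log_div (by positivity) (ne_of_gt ha),
          Real.log_div (ne_of_gt hb) hε']
    have e3 : Real.log (a1 * b2 / (a2 * b))
        = Real.log a1 + Real.log b2 - (Real.log a2 + Real.log b) := by
      rw [Real.log_div (by positivity) (by positivity),
          Real.log_mul (ne_of_gt ha1) (ne_of_gt hb2),
          Real.log_mul (ne_of_gt ha2) (ne_of_gt hb)]
    rw [e1, e2, e3]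
    ring
  refine ⟨heq, ?_⟩
  rw [heq]
  have hR : 0 < a1 * b2 / (a2 * b) := by positivity
  constructor
  · intro h
    have hlog : Real.log (a1 * b2 / (a2 * b)) = 0 :=
      (mul_eq_zero.mp h).resolve_left (one_div_ne_zero hε')
    have h1 : a1 * b2 / (a2 * b) = 1 := by
      rcases Real.log_eq_zero.mp hlog with h0 | h1 | h2
      · exact absurd h0 (ne_of_gt hR)
      · exact h1
      · exfalso; linarith
    have := (div_eq_one_iff_eq (by positivity : a2 * b ≠ 0)).mp h1
    linarith
  · intro h
    have h1 : a1 * b2 / (a2 * b) = 1 := by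
      rw [div_eq_one_iff_eq (by positivity : a2 * b ≠ 0)]
      linarith
    rw [h1, Real.log_one, mul_zero]
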